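/- Suppose cₙ^{ν+1}, dₙ^{ν+1}, c₁^ν, d₁^ν, e, f, g, h, a are nonzero real numbers and n > 0 satisfying: n·cₙ^{ν+1} = a^{1/2}c₁^ν(h·dₙ^{ν+1} − g·cₙ^{ν+1}), n·dₙ^{ν+1} = a^{−1/2}d₁^ν(h·dₙ^{ν+1} − g·cₙ^{ν+1}), −n·c₁^ν = a^{−1/2}cₙ^{ν+1}(f·d₁^ν − e·c₁^ν), −n·d₁^ν = a^{1/2}dₙ^{ν+1}(f·d₁^ν − e·c₁^ν). Define μ_ν = (2a^{1/2}/(1−a²))(−a·h·c₁^ν + g·d₁^ν) and X = g/h, Y = −c₁^ν/d₁^ν. Then μ_ν = (2na/(1−a²))·(X+aY)/(1+aXY). -/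

import Mathlib

theorem mu_in_terms_of_XY (n : ℕ) (hn : 0 < n) (a : ℝ) (ha : a ∈ Set.Ioo (0 : ℝ) 1)
    (cn1 dn1 c1 d1 e f g h : ℝ)
    (hcn1 : cn1 ≠ 0) (hdn1 : dn1 ≠ 0) (hc1 : c1 ≠ 0) (hd1 : d1 ≠ 0)
    (he : e ≠ 0) (hf : f ≠ 0) (hg : g ≠ 0) (hh : h ≠ 0)
    (hrr1 : (n : ℝ) * cn1 = Real.sqrt a * c1 * (h * dn1 - g * cn1))
    (hrr2 : (n : ℝ) * dn1 = (Real.sqrt a)⁻¹ * d1 * (h * dn1 - g * cn1))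
    (hrr3 : -(n : ℝ) * c1 = (Real.sqrt a)⁻¹ * cn1 * (f * d1 - e * c1))
    (hrr4 : -(n : ℝ) * d1 = Real.sqrt a * dn1 * (f * d1 - e * c1))
    (hW1 : h * dn1 - g * cn1 ≠ 0) (hW2 : f * d1 - e * c1 ≠ 0)
    (hXY : 1 + a * (g / h) * (-(c1 / d1)) ≠ 0) :
    (2 * Real.sqrt a / (1 - a ^ 2)) * (-(a * h * c1) + g * d1)
      = (2 * (n : ℝ) * a / (1 - a ^ 2)) * ((g / h) + a * (-(c1 / d1)))
          / (1 + a * (g / h) * (-(c1 / d1))) := by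
  obtain ⟨ha0, ha1⟩ := ha
  have hs0 : Real.sqrt a ≠ 0 := ne_of_gt (Real.sqrt_pos.mpr ha0)
  have hsa : Real.sqrt a * Real.sqrt a = a := Real.mul_self_sqrt ha0.le
  have hrr2' : (n : ℝ) * dn1 * Real.sqrt a = d1 * (h * dn1 - g * cn1) := by
    field_simp at hrr2
    linarith [hrr2]
  have key : h * d1 - a * g * c1 = (n : ℝ) * Real.sqrt a := by
    have h2 : (h * d1 - a * g * c1) * (Real.sqrt a * (h * dn1 - g * cn1))
        = ((n : ℝ) * Real.sqrt a) * (Real.sqrt a * (h * dn1 - g * cn1)) := by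
      linear_combination (-(h * Real.sqrt a)) * hrr2' + (a * g) * hrr1
        + ((n : ℝ) * g * cn1) * hsa
    exact mul_right_cancel₀ (mul_ne_zero hs0 hW1) h2
  have ha2 : 1 - a ^ 2 ≠ 0 := by nlinarith
  have hden : h * d1 - a * g * c1 ≠ 0 := by
    rw [key]
    positivity
  have hXY' : 1 + a * (g / h) * (-(c1 / d1)) = (h * d1 - a * g * c1) / (h * d1) := by
    field_simp
    ring
  rw [hXY']
  have hn' : (n : ℝ) ≠ 0 := by positivity
  rw [key]
  field_simp
  linear_combination (-(a * h * c1) + g * d1) * hsa
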